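/- arXiv:2407.10544 — 3 statements merged into one kernel-verified Lean document; each statement's English description precedes it below -/
import Mathlib

section
/- Let J, R ∈ ℝ^{n×n} with J = -Jᵀ and R symmetric positive semidefinite, let D ∈ ℝ^{n×k} with rank [R, D] = n, and let K ∈ ℝ^{k×k} symmetric positive definite. Then the matrix A := J - R - D K⁻¹ Dᵀ is Hurwitz, i.e., every eigenvalue λ of A satisfies Re λ < 0. -/
open Matrix

/-- A real square matrix is Hurwitz if all of its complex eigenvalues have
negative real part. -/
def IsHurwitz {n : Type*} [Fintype n] [DecidableEq n]
    (A : Matrix n n ℝ) : Prop :=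
  ∀ μ ∈ spectrum ℂ (A.map Complex.ofReal), μ.re < 0

open scoped ComplexOrder

lemma map_mul_ofReal {a b c : ℕ} (M : Matrix (Fin a) (Fin b) ℝ) (N : Matrix (Fin b) (Fin c) ℝ) :
    (M * N).map Complex.ofReal = M.map Complex.ofReal * N.map Complex.ofReal :=
  Matrix.map_mul (f := Complex.ofRealHom)

lemma conjTranspose_map_ofReal {a b : ℕ} (M : Matrix (Fin a) (Fin b) ℝ) :
    (M.map Complex.ofReal)ᴴ = Mᵀ.map Complex.ofReal := by
  ext i j
  simp [conjTranspose_apply]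

lemma psd_map {n : ℕ} {M : Matrix (Fin n) (Fin n) ℝ} (h : M.PosSemidef) :
    (M.map Complex.ofReal).PosSemidef := by
  open scoped MatrixOrder in obtain ⟨B, rfl⟩ := CStarAlgebra.nonneg_iff_eq_star_mul_self.mp h.nonneg
  rw [show star B = Bᵀ from rfl, map_mul_ofReal, ← conjTranspose_map_ofReal]
  exact Matrix.posSemidef_conjTranspose_mul_self _

lemma ker_lemma {n k : ℕ} (R : Matrix (Fin n) (Fin n) ℝ) (D : Matrix (Fin n) (Fin k) ℝ)
    (hRs : Rᵀ = R) (hrank : (fromCols R D).rank = n) {x : Fin n → ℝ}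
    (h1 : R *ᵥ x = 0) (h2 : Dᵀ *ᵥ x = 0) : x = 0 := by
  set M := (fromCols R D)ᵀ with hM
  have hrk : M.rank = n := by rw [hM, Matrix.rank_transpose]; exact hrank
  have hinj : Function.Injective M.mulVecLin := by
    rw [← LinearMap.ker_eq_bot]
    have h := M.mulVecLin.finrank_range_add_finrank_ker
    rw [show Module.finrank ℝ (LinearMap.range M.mulVecLin) = n from hrk] at h
    simp only [Module.finrank_pi, Fintype.card_fin] at h
    have : Module.finrank ℝ (LinearMap.ker M.mulVecLin) = 0 := by omega
    exact Submodule.finrank_eq_zero.mp this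
  have : M.mulVecLin x = M.mulVecLin 0 := by
    simp only [mulVecLin_apply, hM, transpose_fromCols, fromRows_mulVec, h1, hRs, h2,
      mulVec_zero]
    ext (i | i) <;> simp
  exact hinj this

theorem hurwitz_test {n k : ℕ}
    (J R : Matrix (Fin n) (Fin n) ℝ) (D : Matrix (Fin n) (Fin k) ℝ)
    (K : Matrix (Fin k) (Fin k) ℝ)
    (hJ : Jᵀ = -J) (hR : R.PosSemidef)
    (hrank : (Matrix.fromCols R D).rank = n)
    (hK : K.PosDef)
    (μ : ℂ) (hμ : μ ∈ spectrum ℂ ((J - R - D * K⁻¹ * Dᵀ).map Complex.ofReal)) :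
    μ.re < 0 := by
  set A := J - R - D * K⁻¹ * Dᵀ with hA
  -- eigenvector
  have hev : Module.End.HasEigenvalue (Matrix.toLin' (A.map Complex.ofReal)) μ := by
    rw [Module.End.hasEigenvalue_iff_mem_spectrum]
    exact (AlgEquiv.spectrum_eq (Matrix.toLinAlgEquiv (Pi.basisFun ℂ (Fin n)))
      (A.map Complex.ofReal)) ▸ hμ
  obtain ⟨v, hv⟩ := hev.exists_hasEigenvector
  have hv0 : v ≠ 0 := hv.right
  have hAv : (A.map Complex.ofReal) *ᵥ v = μ • v := by
    simpa [Matrix.toLin'_apply] using hv.apply_eq_smul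
  set P := D * K⁻¹ * Dᵀ with hPdef
  have hP : P.PosSemidef := by
    have := (hK.inv.posSemidef).mul_mul_conjTranspose_same (B := D)
    rwa [show Dᴴ = Dᵀ from rfl] at this
  have hRc := psd_map hR
  have hPc := psd_map hP
  have hKinvc := psd_map hK.inv.posSemidef
  set c := star v ⬝ᵥ v with hcdef
  have hcim : c.im = 0 := by
    simp only [hcdef, dotProduct, Complex.im_sum]
    refine Finset.sum_eq_zero fun i _ => ?_
    simp [Complex.mul_im, Complex.star_def]
    ring
  have hcre : 0 < c.re := by
    have hcs : c.re = ∑ i, Complex.normSq (v i) := by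
      simp only [hcdef, dotProduct, Complex.re_sum]
      refine Finset.sum_congr rfl fun i _ => ?_
      simp [Complex.normSq_apply, Complex.mul_re, Complex.star_def]
    rw [hcs]
    obtain ⟨i, hi⟩ := Function.ne_iff.mp hv0
    exact Finset.sum_pos' (fun j _ => Complex.normSq_nonneg _)
      ⟨i, Finset.mem_univ i, Complex.normSq_pos.mpr hi⟩
  -- decomposition
  have hmapA : A.map Complex.ofReal =
      J.map Complex.ofReal - R.map Complex.ofReal - P.map Complex.ofReal := by
    ext i j
    simp [hA, Matrix.sub_apply]
  -- the three terms
  set jt := star v ⬝ᵥ (J.map Complex.ofReal *ᵥ v) with hjt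
  set rt := star v ⬝ᵥ (R.map Complex.ofReal *ᵥ v) with hrt
  set pt := star v ⬝ᵥ (P.map Complex.ofReal *ᵥ v) with hpt
  have hsum : jt - rt - pt = μ * c := by
    rw [hjt, hrt, hpt, ← dotProduct_sub, ← dotProduct_sub, ← sub_mulVec, ← sub_mulVec, ← hmapA,
      hAv, dotProduct_smul, hcdef]
    rfl
  -- jt is purely imaginary
  have hjre : jt.re = 0 := by
    have h1 : star jt = -jt := by
      rw [hjt, ← Matrix.star_dotProduct, star_mulVec, conjTranspose_map_ofReal, hJ]
      rw [← dotProduct_mulVec]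
      rw [show ((-J).map Complex.ofReal) = -(J.map Complex.ofReal) by ext i j; simp,
        neg_mulVec, dotProduct_neg]
    have := congrArg Complex.re h1
    simp only [Complex.star_def, Complex.conj_re, Complex.neg_re] at this
    linarith
  -- pt as quadratic form in w
  set w := (Dᵀ.map Complex.ofReal) *ᵥ v with hwdef
  have hptw : pt = star w ⬝ᵥ (K⁻¹.map Complex.ofReal *ᵥ w) := by
    rw [hpt, hPdef, map_mul_ofReal, map_mul_ofReal, ← mulVec_mulVec, ← mulVec_mulVec,
      dotProduct_mulVec, hwdef]
    congr 1
    rw [star_mulVec, conjTranspose_map_ofReal, transpose_transpose]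
  -- nonnegativity
  have hrtre : 0 ≤ rt.re := hRc.re_dotProduct_nonneg v
  have hptre : 0 ≤ pt.re := by rw [hptw]; exact hKinvc.re_dotProduct_nonneg w
  -- main inequality
  have hmure : μ.re * c.re = -(rt.re + pt.re) := by
    have := congrArg Complex.re hsum
    simp only [Complex.sub_re, Complex.mul_re, hjre, hcim] at this
    linarith
  have hle : μ.re ≤ 0 := by nlinarith
  rcases hle.lt_or_eq with h | h
  · exact h
  exfalso
  have h0 : rt.re = 0 ∧ pt.re = 0 := by constructor <;> nlinarith
  -- rt = 0 and pt = 0 as complex numbers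
  have hrt0 : rt = 0 := by
    have hnn : (0 : ℂ) ≤ rt := hRc.dotProduct_mulVec_nonneg v
    rw [Complex.nonneg_iff] at hnn
    exact Complex.ext h0.1 hnn.2.symm
  have hpt0 : star w ⬝ᵥ (K⁻¹.map Complex.ofReal *ᵥ w) = 0 := by
    have hnn : (0 : ℂ) ≤ pt := hPc.dotProduct_mulVec_nonneg v
    rw [Complex.nonneg_iff] at hnn
    rw [← hptw]
    exact Complex.ext h0.2 hnn.2.symm
  -- kernel conditions over ℂ
  have hRv : R.map Complex.ofReal *ᵥ v = 0 :=
    (hRc.dotProduct_mulVec_zero_iff v).mp hrt0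
  have hKw : K⁻¹.map Complex.ofReal *ᵥ w = 0 :=
    (hKinvc.dotProduct_mulVec_zero_iff w).mp hpt0
  have hDv : Dᵀ.map Complex.ofReal *ᵥ v = 0 := by
    have hKK : K.map Complex.ofReal * K⁻¹.map Complex.ofReal = 1 := by
      rw [← map_mul_ofReal, Matrix.mul_nonsing_inv K
        ((Matrix.isUnit_iff_isUnit_det K).mp hK.isUnit)]
      ext i j
      by_cases hij : i = j <;> simp [one_apply, hij]
    calc Dᵀ.map Complex.ofReal *ᵥ v = w := hwdef.symm
      _ = (K.map Complex.ofReal * K⁻¹.map Complex.ofReal) *ᵥ w := by rw [hKK, one_mulVec]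
      _ = K.map Complex.ofReal *ᵥ (K⁻¹.map Complex.ofReal *ᵥ w) := by
          simp [hwdef, mulVec_mulVec, Matrix.mul_assoc]
      _ = 0 := by rw [hKw, mulVec_zero]
  -- split into real and imaginary parts
  have split : ∀ {m : ℕ} (M : Matrix (Fin m) (Fin n) ℝ), (M.map Complex.ofReal) *ᵥ v = 0 →
      M *ᵥ (fun i => (v i).re) = 0 ∧ M *ᵥ (fun i => (v i).im) = 0 := by
    intro m M h
    constructor <;> funext j <;>
    · have hj := congrFun h j
      simp only [mulVec, dotProduct, map_apply, Pi.zero_apply] at hj ⊢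
      first
      | · have := congrArg Complex.re hj
          simpa [Complex.re_sum, Complex.mul_re] using this
      | · have := congrArg Complex.im hj
          simpa [Complex.im_sum, Complex.mul_im] using this
  have hRs : Rᵀ = R := hR.1
  obtain ⟨ha1, hb1⟩ := split R hRv
  obtain ⟨ha2, hb2⟩ := split Dᵀ hDv
  have ha := ker_lemma R D hRs hrank ha1 ha2
  have hb := ker_lemma R D hRs hrank hb1 hb2
  apply hv0
  funext i
  exact Complex.ext (congrFun ha i) (congrFun hb i)

theorem hurwitz_of_rank_condition {n k : ℕ}
    (J R : Matrix (Fin n) (Fin n) ℝ) (D : Matrix (Fin n) (Fin k) ℝ)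
    (K : Matrix (Fin k) (Fin k) ℝ)
    (hJ : Jᵀ = -J) (hR : R.PosSemidef)
    (hrank : (Matrix.fromCols R D).rank = n)
    (hK : K.PosDef) :
    IsHurwitz (J - R - D * K⁻¹ * Dᵀ) := by
  intro μ hμ
  exact hurwitz_test J R D K hJ hR hrank hK μ hμ
end

section
/- Consider the block matrix M = [[A, D], [-Dᵀ, -K]] with A ∈ ℝ^{n×n}, D ∈ ℝ^{n×k}, and K ∈ ℝ^{k×k} symmetric positive definite. If the Schur complement A - D K⁻¹ Dᵀ (equivalently A + D(-K)⁻¹(-Dᵀ) appropriately signed) is Hurwitz and additionally A = J - R with J skew-symmetric, R positive semidefinite, then M is Hurwitz. -/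
open Matrix

namespace BlockHurwitzAux

open Complex
open scoped ComplexOrder

lemma mem_spectrum_iff_exists {m : Type*} [Fintype m] [DecidableEq m]
    (M : Matrix m m ℂ) (μ : ℂ) :
    μ ∈ spectrum ℂ M ↔ ∃ v, v ≠ 0 ∧ M *ᵥ v = μ • v := by
  have key : ∀ v, ((algebraMap ℂ (Matrix m m ℂ) μ) - M) *ᵥ v = μ • v - M *ᵥ v := by
    intro v
    rw [Matrix.sub_mulVec, Algebra.algebraMap_eq_smul_one, Matrix.smul_mulVec,
      Matrix.one_mulVec]
  rw [spectrum.mem_iff, Matrix.isUnit_iff_isUnit_det, isUnit_iff_ne_zero, not_not,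
    ← Matrix.exists_mulVec_eq_zero_iff]
  constructor
  · rintro ⟨v, hv, h⟩
    rw [key] at h
    exact ⟨v, hv, (sub_eq_zero.mp h).symm⟩
  · rintro ⟨v, hv, h⟩
    exact ⟨v, hv, by rw [key, h, sub_self]⟩

lemma conj_quad {m p : Type*} [Fintype m] [Fintype p] (B : Matrix m p ℂ)
    (u : m → ℂ) (w : p → ℂ) :
    star (star u ⬝ᵥ B *ᵥ w) = star w ⬝ᵥ Bᴴ *ᵥ u := by
  rw [star_dotProduct, star_star, star_mulVec, dotProduct_mulVec]

lemma cmap_mul {m p q : Type*} [Fintype p] (M : Matrix m p ℝ) (N : Matrix p q ℝ) :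
    (M * N).map Complex.ofReal = M.map Complex.ofReal * N.map Complex.ofReal :=
  Matrix.map_mul (f := Complex.ofRealHom)

lemma conjTranspose_cmap {m p : Type*} (B : Matrix m p ℝ) :
    (B.map Complex.ofReal)ᴴ = Bᵀ.map Complex.ofReal := by
  ext i j
  simp

lemma posSemidef_cmap {m : Type*} [Fintype m] [DecidableEq m] {Q : Matrix m m ℝ}
    (h : Q.PosSemidef) : (Q.map Complex.ofReal).PosSemidef := by
  obtain ⟨B, rfl⟩ : ∃ B : Matrix m m ℝ, Q = Bᴴ * B := by
    open scoped MatrixOrder in exact CStarAlgebra.nonneg_iff_eq_star_mul_self.mp h.nonneg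
  have h1 : (Bᴴ * B).map Complex.ofReal
      = (B.map Complex.ofReal)ᴴ * B.map Complex.ofReal := by
    rw [cmap_mul]
    congr 1
    rw [conjTranspose_cmap]
    ext i j
    simp
  rw [h1]
  exact Matrix.posSemidef_conjTranspose_mul_self _

lemma dot_self_eq {m : Type*} [Fintype m] (x : m → ℂ) :
    star x ⬝ᵥ x = ((∑ i, Complex.normSq (x i) : ℝ) : ℂ) := by
  push_cast
  simp [dotProduct, Complex.normSq_eq_conj_mul_self]

end BlockHurwitzAux

open scoped ComplexOrder in
open BlockHurwitzAux in
theorem block_matrix_hurwitz {n k : ℕ}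
    (A J R : Matrix (Fin n) (Fin n) ℝ) (D : Matrix (Fin n) (Fin k) ℝ)
    (K : Matrix (Fin k) (Fin k) ℝ)
    (hK : K.PosDef)
    (hSchur : IsHurwitz (A - D * K⁻¹ * Dᵀ))
    (hA : A = J - R) (hJ : Jᵀ = -J) (hR : R.PosSemidef) :
    IsHurwitz (Matrix.fromBlocks A D (-Dᵀ) (-K)) := by
  intro μ hμ
  set A' : Matrix (Fin n) (Fin n) ℂ := A.map Complex.ofReal with hA'
  set J' : Matrix (Fin n) (Fin n) ℂ := J.map Complex.ofReal with hJ'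
  set R' : Matrix (Fin n) (Fin n) ℂ := R.map Complex.ofReal with hR'
  set D' : Matrix (Fin n) (Fin k) ℂ := D.map Complex.ofReal with hD'
  set Dt' : Matrix (Fin k) (Fin n) ℂ := Dᵀ.map Complex.ofReal with hDt'
  set K' : Matrix (Fin k) (Fin k) ℂ := K.map Complex.ofReal with hK'
  have hMmap : (Matrix.fromBlocks A D (-Dᵀ) (-K)).map Complex.ofReal
      = Matrix.fromBlocks A' D' (-Dt') (-K') := by
    have hnD : (-Dᵀ).map Complex.ofReal = -Dt' := by
      ext i j; simp [Dt', Matrix.map_apply]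
    have hnK : (-K).map Complex.ofReal = -K' := by
      ext i j; simp [K', Matrix.map_apply]
    rw [Matrix.fromBlocks_map, hnD, hnK]
  rw [hMmap] at hμ
  obtain ⟨v, hv, hvec⟩ := (mem_spectrum_iff_exists _ μ).mp hμ
  set x : Fin n → ℂ := v ∘ Sum.inl with hx
  set y : Fin k → ℂ := v ∘ Sum.inr with hy
  rw [Matrix.fromBlocks_mulVec] at hvec
  have h1 : A' *ᵥ x + D' *ᵥ y = μ • x := by
    funext i
    simpa [x, y] using congrFun hvec (Sum.inl i)
  have h2 : (-Dt') *ᵥ x + (-K') *ᵥ y = μ • y := by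
    funext i
    simpa [x, y] using congrFun hvec (Sum.inr i)
  -- quadratic forms
  set qJ : ℂ := star x ⬝ᵥ J' *ᵥ x with hqJ
  set qR : ℂ := star x ⬝ᵥ R' *ᵥ x with hqR
  set qD : ℂ := star x ⬝ᵥ D' *ᵥ y with hqD
  set qDT : ℂ := star y ⬝ᵥ Dt' *ᵥ x with hqDT
  set qK : ℂ := star y ⬝ᵥ K' *ᵥ y with hqK
  have hA'split : A' = J' - R' := by
    ext i j
    simp [A', J', R', hA]
  have E1 : qJ - qR + qD = μ * (star x ⬝ᵥ x) := by
    have := congrArg (fun w => star x ⬝ᵥ w) h1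
    simpa [hA'split, Matrix.sub_mulVec, dotProduct_add, dotProduct_sub,
      dotProduct_smul, smul_eq_mul, qJ, qR, qD] using this
  have E2 : -qDT - qK = μ * (star y ⬝ᵥ y) := by
    have := congrArg (fun w => star y ⬝ᵥ w) h2
    simpa [Matrix.neg_mulVec, dotProduct_add, dotProduct_neg,
      dotProduct_smul, smul_eq_mul, qDT, qK, sub_eq_add_neg] using this
  -- real part facts
  have hqJre : qJ.re = 0 := by
    have hc : star qJ = -qJ := by
      rw [hqJ, conj_quad]
      have : J'ᴴ = -J' := by
        rw [hJ', conjTranspose_cmap, hJ]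
        ext i j
        simp
      rw [this, Matrix.neg_mulVec, dotProduct_neg]
    have : qJ.re = -qJ.re := by
      calc qJ.re = (star qJ).re := (Complex.conj_re qJ).symm
      _ = (-qJ).re := by rw [hc]
      _ = -qJ.re := by simp
    linarith
  have hqDre : qD.re = qDT.re := by
    have hc : star qD = qDT := by
      rw [hqD, conj_quad, hqDT]
      congr 1
      rw [hD', conjTranspose_cmap, hDt']
    calc qD.re = (star qD).re := (Complex.conj_re qD).symm
    _ = qDT.re := by rw [hc]
  have hRpsd := posSemidef_cmap hR
  have hKpsd := posSemidef_cmap hK.posSemidef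
  have hqRre : 0 ≤ qR.re := by simpa [qR, hR'] using hRpsd.re_dotProduct_nonneg x
  have hqKre : 0 ≤ qK.re := by simpa [qK, hK'] using hKpsd.re_dotProduct_nonneg y
  -- norms
  set sx : ℝ := ∑ i, Complex.normSq (x i) with hsx
  set sy : ℝ := ∑ i, Complex.normSq (y i) with hsy
  have hxdot : star x ⬝ᵥ x = (sx : ℂ) := dot_self_eq x
  have hydot : star y ⬝ᵥ y = (sy : ℂ) := dot_self_eq y
  have hsx0 : 0 ≤ sx := Finset.sum_nonneg fun i _ => Complex.normSq_nonneg _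
  have hsy0 : 0 ≤ sy := Finset.sum_nonneg fun i _ => Complex.normSq_nonneg _
  have hs_pos : 0 < sx + sy := by
    have : ∃ i, v i ≠ 0 := Function.ne_iff.mp hv
    obtain ⟨i, hi⟩ := this
    rcases i with i | i
    · have : 0 < Complex.normSq (x i) := Complex.normSq_pos.mpr hi
      have hsx' : 0 < sx := Finset.sum_pos' (fun j _ => Complex.normSq_nonneg _)
        ⟨i, Finset.mem_univ i, this⟩
      linarith
    · have : 0 < Complex.normSq (y i) := Complex.normSq_pos.mpr hi
      have hsy' : 0 < sy := Finset.sum_pos' (fun j _ => Complex.normSq_nonneg _)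
        ⟨i, Finset.mem_univ i, this⟩
      linarith
  -- the master real identity
  have master : μ.re * (sx + sy) = -qR.re - qK.re := by
    have hsum : (qJ - qR + qD) + (-qDT - qK) = μ * ((sx : ℂ) + (sy : ℂ)) := by
      rw [E1, E2, hxdot, hydot, mul_add]
    have := congrArg Complex.re hsum
    simp only [Complex.add_re, Complex.sub_re, Complex.neg_re, hqJre, hqDre] at this
    have hmu : (μ * ((sx : ℂ) + (sy : ℂ))).re = μ.re * (sx + sy) := by
      rw [← Complex.ofReal_add, Complex.mul_re]
      simp
    rw [hmu] at this
    linarith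
  by_contra hcon
  push_neg at hcon
  have hmul : 0 ≤ μ.re * (sx + sy) := mul_nonneg hcon (le_of_lt hs_pos)
  have hqK0 : qK.re = 0 := by linarith [master]
  -- qK = 0, hence y = 0
  have hqKnonneg : (0 : ℂ) ≤ qK := hKpsd.dotProduct_mulVec_nonneg y
  have hqKim : qK.im = 0 := by
    have := (Complex.le_def.mp hqKnonneg).2
    simpa using this.symm
  have hqKzero : qK = 0 := Complex.ext hqK0 hqKim
  have hKy : K' *ᵥ y = 0 := (hKpsd.dotProduct_mulVec_zero_iff y).mp hqKzero
  have hy0 : y = 0 := by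
    by_contra hy0
    have hdet : K'.det = 0 := Matrix.exists_mulVec_eq_zero_iff.mp ⟨y, hy0, hKy⟩
    have : (K.det : ℂ) = 0 := by
      rw [← hdet, hK']
      exact RingHom.map_det Complex.ofRealHom K
    exact hK.det_pos.ne' (by exact_mod_cast this)
  -- x is an eigenvector of the Schur complement
  have hDtx : Dt' *ᵥ x = 0 := by
    have := h2
    rw [hy0] at this
    simpa [Matrix.neg_mulVec, neg_eq_zero] using this
  have hxne : x ≠ 0 := by
    intro hx0
    apply hv
    funext i
    rcases i with i | i
    · exact congrFun hx0 i
    · exact congrFun hy0 i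
  have hAx : A' *ᵥ x = μ • x := by
    have := h1
    rw [hy0] at this
    simpa using this
  have hSmap : (A - D * K⁻¹ * Dᵀ).map Complex.ofReal
      = A' - D' * (K⁻¹.map Complex.ofReal) * Dt' := by
    rw [hA', hD', hDt']
    have h1' : (A - D * K⁻¹ * Dᵀ).map Complex.ofReal
        = A.map Complex.ofReal - (D * K⁻¹ * Dᵀ).map Complex.ofReal :=
      Matrix.map_sub _ (by intro a b; push_cast; ring) _ _
    rw [h1', cmap_mul, cmap_mul]
  have hSeig : ((A - D * K⁻¹ * Dᵀ).map Complex.ofReal) *ᵥ x = μ • x := by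
    rw [hSmap, Matrix.sub_mulVec, ← Matrix.mulVec_mulVec, ← Matrix.mulVec_mulVec,
      hDtx, Matrix.mulVec_zero, Matrix.mulVec_zero, sub_zero, hAx]
  have : μ ∈ spectrum ℂ ((A - D * K⁻¹ * Dᵀ).map Complex.ofReal) :=
    (mem_spectrum_iff_exists _ μ).mpr ⟨x, hxne, hSeig⟩
  exact absurd (hSchur μ this) (not_lt.mpr hcon)
end

section
/- (Bass stabilization) Let A ∈ ℝ^{n×n}, D ∈ ℝ^{n×k}, α > 0 with α larger than the largest singular value of A (so that -αI - Aᵀ and related matrices are stable), and suppose K̂ = K̂ᵀ > 0 solves the Lyapunov equation (αI + A)K̂ + K̂(αI + Aᵀ) = 2 D Dᵀ. Then A - D Dᵀ K̂⁻¹ is Hurwitz. -/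
open Matrix

lemma posdef_map_aux {n : ℕ} (K : Matrix (Fin n) (Fin n) ℝ) (hK : K.PosDef)
    (v : Fin n → ℂ) (hv : v ≠ 0) :
    0 < (dotProduct (star v) ((K.map Complex.ofReal) *ᵥ v)).re := by
  set x : Fin n → ℝ := fun i => (v i).re with hx
  set y : Fin n → ℝ := fun i => (v i).im with hy
  have hre : (dotProduct (star v) ((K.map Complex.ofReal) *ᵥ v)).re
      = dotProduct x (K *ᵥ x) + dotProduct y (K *ᵥ y) := by
    simp only [dotProduct, mulVec, Pi.star_apply, Matrix.map_apply, Complex.re_sum,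
      Complex.mul_re, Complex.ofReal_re, Complex.ofReal_im, RCLike.star_def,
      Complex.conj_re, Complex.conj_im, Finset.mul_sum, Finset.sum_mul]
    rw [← Finset.sum_add_distrib]
    refine Finset.sum_congr rfl fun i _ => ?_
    rw [← Finset.sum_add_distrib]
    refine Finset.sum_congr rfl fun j _ => ?_
    simp [Complex.mul_re, hx, hy]
  rw [hre]
  have hxy : x ≠ 0 ∨ y ≠ 0 := by
    by_contra h
    push_neg at h
    exact hv (funext fun i => Complex.ext (congrFun h.1 i) (congrFun h.2 i))
  have hsx : 0 ≤ dotProduct x (K *ᵥ x) := by have := hK.posSemidef.dotProduct_mulVec_nonneg x; simpa using this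
  have hsy : 0 ≤ dotProduct y (K *ᵥ y) := by have := hK.posSemidef.dotProduct_mulVec_nonneg y; simpa using this
  rcases hxy with h | h
  · have h' := hK.dotProduct_mulVec_pos h
    have : 0 < dotProduct x (K *ᵥ x) := by simpa using h'
    linarith
  · have h' := hK.dotProduct_mulVec_pos h
    have : 0 < dotProduct y (K *ᵥ y) := by simpa using h'
    linarith

theorem bass_stabilization {n k : ℕ}
    (A : Matrix (Fin n) (Fin n) ℝ) (D : Matrix (Fin n) (Fin k) ℝ)
    (α : ℝ) (hα : 0 < α)
    -- `α` exceeds the largest singular value of `A`, i.e. `α²I - AᵀA ≻ 0`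
    (hσ : ((α ^ 2) • (1 : Matrix (Fin n) (Fin n) ℝ) - Aᵀ * A).PosDef)
    (Khat : Matrix (Fin n) (Fin n) ℝ) (hK : Khat.PosDef)
    (hLyap : (α • (1 : Matrix (Fin n) (Fin n) ℝ) + A) * Khat +
        Khat * (α • (1 : Matrix (Fin n) (Fin n) ℝ) + Aᵀ) = (2 : ℝ) • (D * Dᵀ)) :
    IsHurwitz (A - D * Dᵀ * Khat⁻¹) := by
  have hdet : IsUnit Khat.det := isUnit_iff_ne_zero.mpr (ne_of_gt hK.det_pos)
  have hKT : Khatᵀ = Khat := by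
    ext i j
    have := congrFun (congrFun hK.1 i) j
    simpa using this
  set F : Matrix (Fin n) (Fin n) ℝ := A - D * Dᵀ * Khat⁻¹ with hFdef
  -- real Lyapunov identity for the closed loop
  have hA' : A * Khat + Khat * Aᵀ = (2:ℝ) • (D * Dᵀ) - (2*α) • Khat := by
    have h := hLyap
    rw [add_mul, mul_add, smul_mul_assoc, one_mul, mul_smul_comm, mul_one] at h
    rw [eq_sub_iff_add_eq, ← h]
    module
  have hFK : F * Khat = A * Khat - D * Dᵀ := by
    rw [hFdef, sub_mul, mul_assoc (D * Dᵀ), Matrix.nonsing_inv_mul _ hdet, mul_one]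
  have hFT : Fᵀ = Aᵀ - Khat⁻¹ * (D * Dᵀ) := by
    rw [hFdef, transpose_sub, transpose_mul, Matrix.transpose_nonsing_inv, hKT,
      transpose_mul, transpose_transpose]
  have hKFT : Khat * Fᵀ = Khat * Aᵀ - D * Dᵀ := by
    rw [hFT, mul_sub, ← mul_assoc, Matrix.mul_nonsing_inv _ hdet, one_mul]
  have hF : F * Khat + Khat * Fᵀ = (-(2*α)) • Khat := by
    rw [hFK, hKFT]
    calc A * Khat - D * Dᵀ + (Khat * Aᵀ - D * Dᵀ)
        = (A * Khat + Khat * Aᵀ) - (2:ℝ) • (D * Dᵀ) := by module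
      _ = ((2:ℝ) • (D * Dᵀ) - (2*α) • Khat) - (2:ℝ) • (D * Dᵀ) := by rw [hA']
      _ = (-(2*α)) • Khat := by module
  -- move to ℂ
  set Mc : Matrix (Fin n) (Fin n) ℂ := F.map Complex.ofReal with hMc
  set Kc : Matrix (Fin n) (Fin n) ℂ := Khat.map Complex.ofReal with hKc
  have hFc : Mc * Kc + Kc * Mcᵀ = ((-(2*α) : ℝ) : ℂ) • Kc := by
    have h2 := congrArg (fun X : Matrix (Fin n) (Fin n) ℝ =>
      Complex.ofRealHom.mapMatrix X) hF
    simp only [map_add, _root_.map_mul, RingHom.mapMatrix_apply,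
      Complex.ofRealHom_eq_coe] at h2
    have hsm : ((-(2*α)) • Khat).map (Complex.ofReal) = ((-(2*α) : ℝ) : ℂ) • Kc := by
      ext i j; simp [hKc]
    have htr : (Fᵀ).map Complex.ofReal = Mcᵀ := by
      ext i j; simp [hMc]
    calc Mc * Kc + Kc * Mcᵀ
        = F.map Complex.ofReal * Khat.map Complex.ofReal
          + Khat.map Complex.ofReal * (Fᵀ).map Complex.ofReal := by rw [htr]
      _ = ((-(2*α)) • Khat).map Complex.ofReal := h2
      _ = ((-(2*α) : ℝ) : ℂ) • Kc := hsm
  intro μ hμ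
  rw [spectrum.mem_iff, Matrix.isUnit_iff_isUnit_det, isUnit_iff_ne_zero, not_not] at hμ
  have hμ' : (μ • (1 : Matrix (Fin n) (Fin n) ℂ) - Mcᵀ).det = 0 := by
    have h1 : (μ • (1 : Matrix (Fin n) (Fin n) ℂ) - Mcᵀ)
        = (μ • (1 : Matrix (Fin n) (Fin n) ℂ) - Mc)ᵀ := by
      rw [transpose_sub, transpose_smul, transpose_one]
    rw [h1, det_transpose]
    have : algebraMap ℂ (Matrix (Fin n) (Fin n) ℂ) μ
        = μ • (1 : Matrix (Fin n) (Fin n) ℂ) := by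
      simp [Algebra.algebraMap_eq_smul_one]
    rw [this] at hμ
    exact hμ
  obtain ⟨v, hv0, hveq⟩ := (Matrix.exists_mulVec_eq_zero_iff).mpr hμ'
  have hev : Mcᵀ *ᵥ v = μ • v := by
    have := hveq
    rw [sub_mulVec, smul_mulVec, one_mulVec, sub_eq_zero] at this
    exact this.symm
  set s : ℂ := dotProduct (star v) (Kc *ᵥ v) with hs
  have hsre : 0 < s.re := posdef_map_aux Khat hK v hv0
  have hsne : s ≠ 0 := fun h => by simp [h] at hsre
  -- conjugate eigen-relation
  have hstar : star v ᵥ* Mc = (starRingEnd ℂ μ) • star v := by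
    have hMH : Mcᴴ = Mcᵀ := by
      ext i j; simp [hMc, conjTranspose_apply, Matrix.map_apply]
    have hMt : (Mcᵀ)ᴴ = Mc := by
      ext i j; simp [hMc, conjTranspose_apply, Matrix.map_apply]
    have h1 : star (Mcᵀ *ᵥ v) = star v ᵥ* (Mcᵀ)ᴴ := star_mulVec _ _
    rw [hev, star_smul, hMt] at h1
    exact h1.symm
  have key : (starRingEnd ℂ μ) * s + μ * s = ((-(2*α) : ℝ) : ℂ) * s := by
    have h := congrArg (fun X : Matrix (Fin n) (Fin n) ℂ =>
      dotProduct (star v) (X *ᵥ v)) hFc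
    simp only [add_mulVec, dotProduct_add, smul_mulVec, dotProduct_smul,
      smul_eq_mul] at h
    rw [← mulVec_mulVec, ← mulVec_mulVec, dotProduct_mulVec, hstar, hev] at h
    rw [mulVec_smul, dotProduct_smul, smul_dotProduct, smul_eq_mul, smul_eq_mul] at h
    exact h
  have hmu : (starRingEnd ℂ μ) + μ = ((-(2*α) : ℝ) : ℂ) := by
    have : ((starRingEnd ℂ μ) + μ) * s = ((-(2*α) : ℝ) : ℂ) * s := by
      rw [add_mul]; exact key
    exact mul_right_cancel₀ hsne this
  have hre := congrArg Complex.re hmu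
  rw [Complex.add_re, Complex.conj_re, Complex.ofReal_re] at hre
  linarith
end
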